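/- For all integers N, B and every natural number d, one has (over ℚ): (-2)^d · Σ_{u=0}^{d} 2^{-u} · C(N, u) · C(B, d-u) = 2^d · P^{a,b}_d(0), where a = -N - B - 1 and b = B - d. -/

import Mathlib

/-- Generalized binomial coefficient `C(x,n) = x(x-1)⋯(x-n+1)/n!` over `ℚ`. -/
def qchoose (x : ℚ) (n : ℕ) : ℚ :=
  (∏ i ∈ Finset.range n, (x - i)) / (n.factorial : ℚ)

/-- Constant term of the Jacobi polynomial:
`P^{a,b}_d(0) = 2^{-d} Σ_{v=0}^{d} C(d+a,v) C(d+b,d-v) (-1)^{d-v}`. -/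
def jacobiZero (a b : ℚ) (d : ℕ) : ℚ :=
  (1 / 2 : ℚ) ^ d *
    ∑ v ∈ Finset.range (d + 1),
      qchoose ((d : ℚ) + a) v * qchoose ((d : ℚ) + b) (d - v) * (-1 : ℚ) ^ (d - v)

open Finset

lemma descPochhammer_smeval_rat (x : ℚ) (n : ℕ) :
    (descPochhammer ℤ n).smeval x = ∏ i ∈ range n, (x - i) := by
  induction n with
  | zero => simp [descPochhammer_zero, Polynomial.smeval_one]
  | succ n ih =>
    rw [descPochhammer_succ_right, Polynomial.smeval_mul, ih, prod_range_succ]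
    congr 1
    rw [Polynomial.smeval_sub, Polynomial.smeval_X, Polynomial.smeval_natCast]
    simp

lemma qchoose_eq_choose (x : ℚ) (n : ℕ) : qchoose x n = Ring.choose x n := by
  have h := Ring.descPochhammer_eq_factorial_smul_choose x n
  rw [descPochhammer_smeval_rat, nsmul_eq_mul] at h
  rw [qchoose, h, mul_div_cancel_left₀]
  exact_mod_cast n.factorial_ne_zero

lemma qchoose_add (x y : ℚ) (k : ℕ) :
    qchoose (x + y) k = ∑ u ∈ range (k + 1), qchoose x u * qchoose y (k - u) := by
  simp_rw [qchoose_eq_choose]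
  rw [Ring.add_choose_eq k (Commute.all x y),
    Finset.Nat.sum_antidiagonal_eq_sum_range_succ (fun a b => Ring.choose x a * Ring.choose y b)]

lemma qchoose_trinomial (x : ℚ) {n j : ℕ} (h : j ≤ n) :
    (n.choose j : ℚ) * qchoose x n = qchoose x j * qchoose (x - j) (n - j) := by
  have h2 := Ring.choose_smul_choose x h
  simp_rw [qchoose_eq_choose]
  rw [← h2, nsmul_eq_mul]

lemma qchoose_neg (x : ℚ) (n : ℕ) :
    qchoose (-x) n = (-1) ^ n * qchoose (x + n - 1) n := by
  rw [qchoose, qchoose, ← mul_div_assoc]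
  congr 1
  have h1 : ∀ i ∈ range n, (-x - (i : ℚ)) = -1 * (x + i) := by intros; ring
  rw [prod_congr rfl h1, prod_mul_distrib, prod_const, card_range]
  congr 1
  rw [← prod_range_reflect (fun j => x + (j : ℚ)) n]
  refine prod_congr rfl fun j hj => ?_
  have hj' : j < n := mem_range.mp hj
  have : ((n - 1 - j : ℕ) : ℚ) = (n : ℚ) - 1 - j := by
    rw [Nat.cast_sub (by omega), Nat.cast_sub (by omega)]
    simp
  rw [this]; ring

lemma sum_tri (n : ℕ) (f : ℕ → ℕ → ℚ) :
    ∑ u ∈ range (n + 1), ∑ j ∈ range (n + 1 - u), f u j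
      = ∑ j ∈ range (n + 1), ∑ u ∈ range (n + 1 - j), f u j := by
  have key : ∀ (g : ℕ → ℕ → ℚ) (u : ℕ),
      ∑ j ∈ range (n + 1 - u), g u j
        = ∑ j ∈ range (n + 1), if u + j ≤ n then g u j else 0 := by
    intro g u
    rw [← Finset.sum_filter]
    apply Finset.sum_congr _ (fun _ _ => rfl)
    ext j
    simp only [mem_filter, mem_range]
    omega
  have key2 : ∀ (g : ℕ → ℕ → ℚ) (j : ℕ),
      ∑ u ∈ range (n + 1 - j), g u j
        = ∑ u ∈ range (n + 1), if u + j ≤ n then g u j else 0 := by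
    intro g j
    rw [← Finset.sum_filter]
    apply Finset.sum_congr _ (fun _ _ => rfl)
    ext u
    simp only [mem_filter, mem_range]
    omega
  simp_rw [key f]
  rw [Finset.sum_comm]
  exact sum_congr rfl fun j _ => (key2 f j).symm

lemma main_key (N B : ℤ) (d : ℕ) :
    (2 : ℚ) ^ d *
        ∑ u ∈ range (d + 1), (1 / 2 : ℚ) ^ u * qchoose (N : ℚ) u * qchoose (B : ℚ) (d - u)
      = ∑ j ∈ range (d + 1), qchoose ((N : ℚ) + B - j) (d - j) * qchoose (B : ℚ) j := by
  rw [mul_sum]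
  have step1 : ∀ u ∈ range (d + 1),
      (2 : ℚ) ^ d * ((1 / 2 : ℚ) ^ u * qchoose (N : ℚ) u * qchoose (B : ℚ) (d - u))
        = ∑ j ∈ range (d + 1 - u),
            qchoose (N : ℚ) u * (qchoose (B : ℚ) j * qchoose ((B : ℚ) - j) (d - u - j)) := by
    intro u hu
    have hu' : u ≤ d := Nat.lt_succ_iff.mp (mem_range.mp hu)
    have hpow : (2 : ℚ) ^ d * (1 / 2 : ℚ) ^ u = 2 ^ (d - u) := by
      have : (2 : ℚ) ^ d = 2 ^ (d - u) * 2 ^ u := by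
        rw [← pow_add]; congr 1; omega
      rw [this]
      field_simp
      rw [← mul_pow]; norm_num
    have h2 : (2 : ℚ) ^ (d - u) = ∑ j ∈ range (d - u + 1), ((d - u).choose j : ℚ) := by
      rw [← Nat.cast_sum]
      exact_mod_cast (Nat.sum_range_choose (d - u)).symm
    calc (2 : ℚ) ^ d * ((1 / 2 : ℚ) ^ u * qchoose (N : ℚ) u * qchoose (B : ℚ) (d - u))
        = ((2 : ℚ) ^ d * (1 / 2 : ℚ) ^ u) * (qchoose (N : ℚ) u * qchoose (B : ℚ) (d - u)) := by
          ring
      _ = (∑ j ∈ range (d - u + 1), ((d - u).choose j : ℚ))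
            * (qchoose (N : ℚ) u * qchoose (B : ℚ) (d - u)) := by rw [hpow, h2]
      _ = ∑ j ∈ range (d - u + 1),
            qchoose (N : ℚ) u * (((d - u).choose j : ℚ) * qchoose (B : ℚ) (d - u)) := by
          rw [sum_mul]; exact sum_congr rfl fun j _ => by ring
      _ = ∑ j ∈ range (d + 1 - u),
            qchoose (N : ℚ) u * (qchoose (B : ℚ) j * qchoose ((B : ℚ) - j) (d - u - j)) := by
          have hr : d - u + 1 = d + 1 - u := by omega
          rw [hr]
          refine sum_congr rfl fun j hj => ?_
          have hj' : j ≤ d - u := by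
            have := mem_range.mp hj; omega
          rw [qchoose_trinomial (B : ℚ) hj']
  rw [sum_congr rfl step1,
    sum_tri d (fun u j => qchoose (N : ℚ) u * (qchoose (B : ℚ) j * qchoose ((B : ℚ) - j) (d - u - j)))]
  refine sum_congr rfl fun j hj => ?_
  have hj' : j ≤ d := Nat.lt_succ_iff.mp (mem_range.mp hj)
  have hv : qchoose ((N : ℚ) + B - j) (d - j)
      = ∑ u ∈ range (d + 1 - j), qchoose (N : ℚ) u * qchoose ((B : ℚ) - j) (d - j - u) := by
    have := qchoose_add (N : ℚ) ((B : ℚ) - j) (d - j)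
    have harg : (N : ℚ) + ((B : ℚ) - j) = (N : ℚ) + B - j := by ring
    have hr : d - j + 1 = d + 1 - j := by omega
    rw [harg, hr] at this
    exact this
  rw [hv, sum_mul]
  refine sum_congr rfl fun u hu => ?_
  have : d - u - j = d - j - u := by omega
  rw [this]; ring

theorem combinatorial_sum_jacobi (N B : ℤ) (d : ℕ) :
    (-2 : ℚ) ^ d *
        ∑ u ∈ Finset.range (d + 1),
          (1 / 2 : ℚ) ^ u * qchoose (N : ℚ) u * qchoose (B : ℚ) (d - u)
      = 2 ^ d * jacobiZero (-(N : ℚ) - (B : ℚ) - 1) ((B : ℚ) - (d : ℚ)) d := by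
  rw [jacobiZero, ← mul_assoc]
  have h2 : (2 : ℚ) ^ d * (1 / 2 : ℚ) ^ d = 1 := by
    rw [← mul_pow]; norm_num
  rw [h2, one_mul]
  have ha : (d : ℚ) + (-(N : ℚ) - (B : ℚ) - 1) = -((N : ℚ) + B + 1 - d) := by ring
  have hb : (d : ℚ) + ((B : ℚ) - (d : ℚ)) = (B : ℚ) := by ring
  rw [ha, hb]
  have hRHS : ∑ v ∈ range (d + 1),
      qchoose (-((N : ℚ) + B + 1 - d)) v * qchoose (B : ℚ) (d - v) * (-1 : ℚ) ^ (d - v)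
      = (-1 : ℚ) ^ d *
          ∑ j ∈ range (d + 1), qchoose ((N : ℚ) + B - j) (d - j) * qchoose (B : ℚ) j := by
    rw [mul_sum]
    rw [← sum_range_reflect
      (fun j => (-1 : ℚ) ^ d * (qchoose ((N : ℚ) + B - j) (d - j) * qchoose (B : ℚ) j)) (d + 1)]
    refine sum_congr rfl fun v hv => ?_
    have hv' : v ≤ d := Nat.lt_succ_iff.mp (mem_range.mp hv)
    have hsimp : d + 1 - 1 - v = d - v := by omega
    rw [hsimp]
    rw [qchoose_neg]
    have harg : (N : ℚ) + B + 1 - d + v - 1 = (N : ℚ) + B - ((d - v : ℕ) : ℚ) := by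
      rw [Nat.cast_sub hv']; ring
    rw [harg]
    have hdd : d - (d - v) = v := by omega
    rw [hdd]
    have hsign : (-1 : ℚ) ^ v * (-1 : ℚ) ^ (d - v) = (-1 : ℚ) ^ d := by
      rw [← pow_add]; congr 1; omega
    calc (-1 : ℚ) ^ v * qchoose ((N : ℚ) + B - ((d - v : ℕ) : ℚ)) v * qchoose (B : ℚ) (d - v)
          * (-1 : ℚ) ^ (d - v)
        = ((-1 : ℚ) ^ v * (-1 : ℚ) ^ (d - v)) *
            (qchoose ((N : ℚ) + B - ((d - v : ℕ) : ℚ)) v * qchoose (B : ℚ) (d - v)) := by ring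
      _ = (-1 : ℚ) ^ d *
            (qchoose ((N : ℚ) + B - ((d - v : ℕ) : ℚ)) v * qchoose (B : ℚ) (d - v)) := by
          rw [hsign]
  rw [hRHS]
  have hneg : (-2 : ℚ) ^ d = (-1 : ℚ) ^ d * 2 ^ d := by
    rw [← mul_pow]; norm_num
  rw [hneg, mul_assoc, main_key N B d]
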